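/- In the unbounded forecasting game with general hedge h satisfying (A0)-(A2) and h(0)=0, and with g a positive increasing function, Reality can strongly comply with the event: ∑_n v_n/g(A_n) < ∞ if and only if (∑_{k=1}^n (x_k - m_k)) / (h^{-1} ∘ g)(A_n) converges. -/

import Mathlib

open Filter Finset

/-- Capital process in the unbounded forecasting game with general hedge `h`,
initial capital 1. -/
def capitalH (h : ℝ → ℝ) (m v M V x : ℕ → ℝ) : ℕ → ℝ
  | 0 => 1
  | n + 1 => capitalH h m v M V x n + M n * (x n - m n) +
      V n * (h (x n - m n) - v n)

namespace Stmt11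

structure St where
  K : ℝ
  S : ℝ
  j : ℕ

/-- cumulative sum of the `v`'s up to and including round `n` -/
def Aa (v : ℕ → ℝ) (n : ℕ) : ℝ := ∑ k ∈ Finset.range (n + 1), v k

noncomputable def bet (g : ℝ → ℝ) (v : ℕ → ℝ) (n : ℕ) : ℝ := v n / g (Aa v n)

noncomputable def BB (g : ℝ → ℝ) (v : ℕ → ℝ) (n : ℕ) : ℝ :=
  ∑ k ∈ Finset.range (n + 1), min (bet g v k) 1

noncomputable def cc (hinv g : ℝ → ℝ) (v : ℕ → ℝ) (n : ℕ) : ℝ := hinv (g (Aa v n))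

/-- escape eligibility -/
def elig (g : ℝ → ℝ) (v V : ℕ → ℝ) (n : ℕ) (st : St) : Prop :=
  V n * (g (Aa v n) - v n) ≤ 1 - st.K ∧ ((st.j : ℝ) + 1) ≤ BB g v n

noncomputable def sg (x : ℝ) : ℝ := if 0 < x then -1 else 1

open Classical in
/-- Reality's move -/
noncomputable def mv (hinv g : ℝ → ℝ) (v M V : ℕ → ℝ) (n : ℕ) (st : St) : ℝ :=
  if elig g v V n st then
    if |st.S / cc hinv g v n - st.S / hinv (g (∑ k ∈ Finset.range n, v k))| ≤
       |st.S / cc hinv g v n + sg (M n) - st.S / hinv (g (∑ k ∈ Finset.range n, v k))| then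
      sg (M n) * cc hinv g v n
    else 0
  else 0

open Classical in
/-- Reality's state process -/
noncomputable def stt (h hinv g : ℝ → ℝ) (v M V : ℕ → ℝ) : ℕ → St
  | 0 => ⟨1, 0, 0⟩
  | n + 1 =>
      ⟨(stt h hinv g v M V n).K + M n * mv hinv g v M V n (stt h hinv g v M V n) +
          V n * (h (mv hinv g v M V n (stt h hinv g v M V n)) - v n),
        (stt h hinv g v M V n).S + mv hinv g v M V n (stt h hinv g v M V n),
        (stt h hinv g v M V n).j + if elig g v V n (stt h hinv g v M V n) then 1 else 0⟩

section Basic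

variable {h hinv g : ℝ → ℝ}

lemma hinv_nonneg (hA0 : ∀ x : ℝ, h x = h |x| ∧ 0 ≤ h x)
    (hinv_left : ∀ x : ℝ, 0 ≤ x → hinv (h x) = x)
    (hinv_right : ∀ y : ℝ, 0 ≤ y → h (hinv y) = y)
    {y : ℝ} (hy : 0 ≤ y) : 0 ≤ hinv y := by
  have h1 : h (hinv y) = y := hinv_right y hy
  have h2 : h |hinv y| = y := by rw [← (hA0 (hinv y)).1, h1]
  have h3 : hinv (h |hinv y|) = |hinv y| := hinv_left _ (abs_nonneg _)
  rw [h2] at h3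
  rw [h3]
  exact abs_nonneg _

lemma hinv_pos (hA4 : h 0 = 0)
    (hinv_right : ∀ y : ℝ, 0 ≤ y → h (hinv y) = y)
    (hnn : ∀ y : ℝ, 0 ≤ y → 0 ≤ hinv y)
    {y : ℝ} (hy : 0 < y) : 0 < hinv y := by
  rcases lt_or_eq_of_le (hnn y hy.le) with h' | h'
  · exact h'
  · exfalso
    have := hinv_right y hy.le
    rw [← h', hA4] at this
    linarith

lemma hinv_mono (hmono : StrictMonoOn h (Set.Ici (0 : ℝ)))
    (hinv_right : ∀ y : ℝ, 0 ≤ y → h (hinv y) = y)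
    (hnn : ∀ y : ℝ, 0 ≤ y → 0 ≤ hinv y)
    {y₁ y₂ : ℝ} (h1 : 0 ≤ y₁) (h12 : y₁ ≤ y₂) : hinv y₁ ≤ hinv y₂ := by
  by_contra hc
  push_neg at hc
  have := hmono (Set.mem_Ici.2 (hnn y₂ (h1.trans h12))) (Set.mem_Ici.2 (hnn y₁ h1)) hc
  rw [hinv_right y₁ h1, hinv_right y₂ (h1.trans h12)] at this
  linarith

lemma sg_cases (x : ℝ) : sg x = 1 ∨ sg x = -1 := by
  unfold sg; split <;> simp

lemma abs_sg (x : ℝ) : |sg x| = 1 := by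
  rcases sg_cases x with h' | h' <;> rw [h'] <;> simp

lemma mul_sg_nonpos (x : ℝ) : x * sg x ≤ 0 := by
  unfold sg; split
  · nlinarith
  · next hx => push_neg at hx; nlinarith

lemma Aa_nonneg {v : ℕ → ℝ} (hv : ∀ n, 0 ≤ v n) (n : ℕ) : 0 ≤ Aa v n :=
  Finset.sum_nonneg fun k _ => hv k

lemma Aa_mono {v : ℕ → ℝ} (hv : ∀ n, 0 ≤ v n) : Monotone (Aa v) := by
  intro a b hab
  exact Finset.sum_le_sum_of_subset_of_nonneg
    (Finset.range_subset_range.2 (by omega)) (fun k _ _ => hv k)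

lemma bet_nonneg (hgpos : ∀ x, 0 < g x) {v : ℕ → ℝ} (hv : ∀ n, 0 ≤ v n) (n : ℕ) :
    0 ≤ bet g v n := div_nonneg (hv n) (hgpos _).le

end Basic

section Invariants

set_option linter.unusedSectionVars false

variable {h hinv g : ℝ → ℝ}
variable (hA0 : ∀ x : ℝ, h x = h |x| ∧ 0 ≤ h x)
variable (hA4 : h 0 = 0)
variable (hmono : StrictMonoOn h (Set.Ici (0 : ℝ)))
variable (hinv_left : ∀ x : ℝ, 0 ≤ x → hinv (h x) = x)
variable (hinv_right : ∀ y : ℝ, 0 ≤ y → h (hinv y) = y)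
variable (hgpos : ∀ x, 0 < g x) (hgmono : Monotone g)

include hA0 hA4 hmono hinv_left hinv_right hgpos hgmono

lemma cc_pos {v : ℕ → ℝ} (n : ℕ) : 0 < cc hinv g v n :=
  hinv_pos hA4 hinv_right (fun y hy => hinv_nonneg hA0 hinv_left hinv_right hy) (hgpos _)

lemma cc_mono {v : ℕ → ℝ} (hv : ∀ n, 0 ≤ v n) : Monotone (cc hinv g v) := by
  intro a b hab
  exact hinv_mono hmono hinv_right (fun y hy => hinv_nonneg hA0 hinv_left hinv_right hy)
    (hgpos _).le (hgmono (Aa_mono hv hab))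

lemma h_escape {v : ℕ → ℝ} (x : ℝ) (n : ℕ) :
    h (sg x * cc hinv g v n) = g (Aa v n) := by
  have hc : 0 ≤ cc hinv g v n :=
    (cc_pos hA0 hA4 hmono hinv_left hinv_right hgpos hgmono (v := v) n).le
  have h1 : h (sg x * cc hinv g v n) = h (cc hinv g v n) := by
    rw [(hA0 (sg x * cc hinv g v n)).1, abs_mul, abs_sg, one_mul, abs_of_nonneg hc]
  rw [h1]
  exact hinv_right _ (hgpos _).le

/-- The capital never exceeds 1. -/
lemma K_le_one {v M V : ℕ → ℝ} (hv : ∀ n, 0 ≤ v n) (hV : ∀ n, 0 ≤ V n) :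
    ∀ n, (stt h hinv g v M V n).K ≤ 1 := by
  intro n
  induction n with
  | zero => simp [stt]
  | succ n ih =>
    show (stt h hinv g v M V n).K + M n * mv hinv g v M V n (stt h hinv g v M V n) +
        V n * (h (mv hinv g v M V n (stt h hinv g v M V n)) - v n) ≤ 1
    by_cases he : elig g v V n (stt h hinv g v M V n)
    · by_cases hb : |(stt h hinv g v M V n).S / cc hinv g v n -
          (stt h hinv g v M V n).S / hinv (g (∑ k ∈ Finset.range n, v k))| ≤
          |(stt h hinv g v M V n).S / cc hinv g v n + sg (M n) -
          (stt h hinv g v M V n).S / hinv (g (∑ k ∈ Finset.range n, v k))|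
      · have hmv : mv hinv g v M V n (stt h hinv g v M V n) = sg (M n) * cc hinv g v n := by
          unfold mv; rw [if_pos he, if_pos hb]
        rw [hmv, h_escape hA0 hA4 hmono hinv_left hinv_right hgpos hgmono (M n) n]
        have h2 : M n * (sg (M n) * cc hinv g v n) ≤ 0 := by
          have := mul_sg_nonpos (M n)
          have hc := (cc_pos hA0 hA4 hmono hinv_left hinv_right hgpos hgmono (v := v) n).le
          nlinarith
        have h3 : V n * (g (Aa v n) - v n) ≤ 1 - (stt h hinv g v M V n).K := he.1
        linarith
      · have hmv : mv hinv g v M V n (stt h hinv g v M V n) = 0 := by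
          unfold mv; rw [if_pos he, if_neg hb]
        rw [hmv, hA4]
        have := mul_nonneg (hV n) (hv n)
        nlinarith
    · have hmv : mv hinv g v M V n (stt h hinv g v M V n) = 0 := by
        unfold mv; rw [if_neg he]
      rw [hmv, hA4]
      have := mul_nonneg (hV n) (hv n)
      nlinarith

end Invariants

section Identities

variable {h hinv g : ℝ → ℝ}

/-- the state's S-component is the sum of the moves -/
lemma S_eq {v M V : ℕ → ℝ} :
    ∀ n, (stt h hinv g v M V n).S =
      ∑ k ∈ Finset.range n, mv hinv g v M V k (stt h hinv g v M V k) := by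
  intro n
  induction n with
  | zero => simp [stt]
  | succ n ih =>
    rw [Finset.sum_range_succ, ← ih]
    rfl

/-- the state's K-component is the capital process -/
lemma K_eq {m v M V : ℕ → ℝ} :
    ∀ n, capitalH h m v M V (fun k => m k + mv hinv g v M V k (stt h hinv g v M V k)) n =
      (stt h hinv g v M V n).K := by
  intro n
  induction n with
  | zero => simp [capitalH, stt]
  | succ n ih =>
    show capitalH h m v M V _ n + M n * (m n + mv hinv g v M V n (stt h hinv g v M V n) - m n) +
        V n * (h (m n + mv hinv g v M V n (stt h hinv g v M V n) - m n) - v n) = _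
    rw [add_sub_cancel_left, ih]
    rfl

lemma j_mono {v M V : ℕ → ℝ} : Monotone fun n => (stt h hinv g v M V n).j := by
  apply monotone_nat_of_le_succ
  intro n
  show (stt h hinv g v M V n).j ≤ (stt h hinv g v M V n).j + _
  omega

end Identities

section Congr

variable {h hinv g : ℝ → ℝ}

lemma Aa_congr {v v' : ℕ → ℝ} {n : ℕ} (hv : ∀ k ≤ n, v k = v' k) : Aa v n = Aa v' n :=
  Finset.sum_congr rfl fun k hk => hv k (Nat.lt_succ_iff.1 (Finset.mem_range.1 hk))

lemma BB_congr {v v' : ℕ → ℝ} {n : ℕ} (hv : ∀ k ≤ n, v k = v' k) : BB g v n = BB g v' n := by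
  refine Finset.sum_congr rfl fun k hk => ?_
  have hk' : k ≤ n := Nat.lt_succ_iff.1 (Finset.mem_range.1 hk)
  unfold bet
  rw [hv k hk', Aa_congr (fun i hi => hv i (hi.trans hk'))]

lemma elig_congr {v v' V V' : ℕ → ℝ} {n : ℕ} (st : St)
    (hv : ∀ k ≤ n, v k = v' k) (hV : ∀ k ≤ n, V k = V' k) :
    elig g v V n st = elig g v' V' n st := by
  unfold elig
  rw [Aa_congr hv, BB_congr hv, hV n le_rfl, hv n le_rfl]

lemma mv_congr {v v' M M' V V' : ℕ → ℝ} {n : ℕ} (st : St)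
    (hv : ∀ k ≤ n, v k = v' k) (hM : ∀ k ≤ n, M k = M' k) (hV : ∀ k ≤ n, V k = V' k) :
    mv hinv g v M V n st = mv hinv g v' M' V' n st := by
  have e1 : Aa v n = Aa v' n := Aa_congr hv
  have e2 : (∑ k ∈ Finset.range n, v k) = ∑ k ∈ Finset.range n, v' k :=
    Finset.sum_congr rfl fun k hk => hv k (Finset.mem_range.1 hk).le
  have e4 : M n = M' n := hM n le_rfl
  have he : elig g v V n st = elig g v' V' n st := elig_congr st hv hV
  unfold mv cc
  rw [e1, e2, e4, he]

lemma stt_congr {v v' M M' V V' : ℕ → ℝ} :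
    ∀ n, (∀ k ≤ n, v k = v' k) → (∀ k ≤ n, M k = M' k) → (∀ k ≤ n, V k = V' k) →
      stt h hinv g v M V n = stt h hinv g v' M' V' n := by
  intro n
  induction n with
  | zero => intro _ _ _; rfl
  | succ n ih =>
    intro hv hM hV
    have hv' : ∀ k ≤ n, v k = v' k := fun k hk => hv k (hk.trans n.le_succ)
    have hM' : ∀ k ≤ n, M k = M' k := fun k hk => hM k (hk.trans n.le_succ)
    have hV' : ∀ k ≤ n, V k = V' k := fun k hk => hV k (hk.trans n.le_succ)
    have hst := ih hv' hM' hV'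
    show St.mk _ _ _ = St.mk _ _ _
    rw [hst, mv_congr _ hv' hM' hV', elig_congr _ hv' hV', hM n n.le_succ, hV n n.le_succ,
      hv n n.le_succ]

end Congr

section Summable

set_option linter.unusedSectionVars false

variable {h hinv g : ℝ → ℝ}
variable (hA0 : ∀ x : ℝ, h x = h |x| ∧ 0 ≤ h x)
variable (hA4 : h 0 = 0)
variable (hmono : StrictMonoOn h (Set.Ici (0 : ℝ)))
variable (hinv_left : ∀ x : ℝ, 0 ≤ x → hinv (h x) = x)
variable (hinv_right : ∀ y : ℝ, 0 ≤ y → h (hinv y) = y)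
variable (hgpos : ∀ x, 0 < g x) (hgmono : Monotone g)

include hA0 hA4 hmono hinv_left hinv_right hgpos hgmono

lemma exists_limit {v M V : ℕ → ℝ} (hv : ∀ n, 0 ≤ v n)
    (hsum : Summable fun n => bet g v n) :
    ∃ L, Tendsto (fun n => (stt h hinv g v M V (n+1)).S / cc hinv g v n) atTop (nhds L) := by
  classical
  set C := ∑' n, bet g v n with hC
  have hbet0 : ∀ n, 0 ≤ bet g v n := bet_nonneg hgpos hv
  have hC0 : 0 ≤ C := tsum_nonneg hbet0
  have hBle : ∀ n, BB g v n ≤ C := by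
    intro n
    calc BB g v n ≤ ∑ k ∈ Finset.range (n+1), bet g v k :=
          Finset.sum_le_sum fun k _ => min_le_left _ _
      _ ≤ C := Summable.sum_le_tsum _ (fun k _ => hbet0 k) hsum
  have hjle : ∀ n, ((stt h hinv g v M V n).j : ℝ) ≤ C + 1 := by
    intro n
    induction n with
    | zero => simpa [stt] using by linarith
    | succ n ih =>
      show (((stt h hinv g v M V n).j + if elig g v V n (stt h hinv g v M V n) then 1 else 0 : ℕ)
        : ℝ) ≤ C + 1
      by_cases he : elig g v V n (stt h hinv g v M V n)
      · rw [if_pos he]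
        push_cast
        have := he.2
        have := hBle n
        linarith
      · rw [if_neg he]
        simpa using ih
  -- finitely many escapes
  have hfin : ∃ N, ∀ n, N ≤ n → ¬ elig g v V n (stt h hinv g v M V n) := by
    by_contra hcon
    push_neg at hcon
    have hgrow : ∀ b : ℕ, ∃ n, b ≤ (stt h hinv g v M V n).j := by
      intro b
      induction b with
      | zero => exact ⟨0, Nat.zero_le _⟩
      | succ b ihb =>
        obtain ⟨n, hn⟩ := ihb
        obtain ⟨n', hn', he'⟩ := hcon n
        refine ⟨n' + 1, ?_⟩
        have hj : (stt h hinv g v M V (n'+1)).j = (stt h hinv g v M V n').j + 1 := by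
          simp [stt, he']
        have hjm : (stt h hinv g v M V n).j ≤ (stt h hinv g v M V n').j :=
          j_mono (h := h) (hinv := hinv) (g := g) (v := v) (M := M) (V := V) hn'
        omega
    obtain ⟨n, hn⟩ := hgrow (⌈C + 1⌉₊ + 1)
    have h1 : ((⌈C + 1⌉₊ + 1 : ℕ) : ℝ) ≤ ((stt h hinv g v M V n).j : ℝ) := by exact_mod_cast hn
    have h2 : (C + 1) ≤ (⌈C + 1⌉₊ : ℝ) := Nat.le_ceil _
    have h3 := hjle n
    push_cast at h1
    linarith
  obtain ⟨N, hN⟩ := hfin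
  have hmv0 : ∀ n, N ≤ n → mv hinv g v M V n (stt h hinv g v M V n) = 0 := by
    intro n hn
    unfold mv
    rw [if_neg (hN n hn)]
  have hSconst : ∀ n, N ≤ n → (stt h hinv g v M V (n+1)).S = (stt h hinv g v M V (N+1)).S := by
    intro n hn
    induction n, hn using Nat.le_induction with
    | base => rfl
    | succ n hn ih =>
      show (stt h hinv g v M V (n+1)).S + mv hinv g v M V (n+1) (stt h hinv g v M V (n+1)) = _
      rw [hmv0 (n+1) (by omega), add_zero, ih]
  set Sc := (stt h hinv g v M V (N+1)).S with hSc
  have hev : (fun n => Sc / cc hinv g v n) =ᶠ[atTop]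
      (fun n => (stt h hinv g v M V (n+1)).S / cc hinv g v n) := by
    filter_upwards [eventually_ge_atTop N] with n hn
    rw [hSconst n hn]
  have hccmono : Monotone (cc hinv g v) :=
    cc_mono hA0 hA4 hmono hinv_left hinv_right hgpos hgmono hv
  by_cases hbdd : BddAbove (Set.range (cc hinv g v))
  · have htend : Tendsto (cc hinv g v) atTop (nhds (⨆ n, cc hinv g v n)) :=
      tendsto_atTop_ciSup hccmono hbdd
    have hsup_pos : 0 < ⨆ n, cc hinv g v n :=
      lt_of_lt_of_le (cc_pos hA0 hA4 hmono hinv_left hinv_right hgpos hgmono (v := v) 0)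
        (le_ciSup hbdd 0)
    exact ⟨Sc / ⨆ n, cc hinv g v n,
      Tendsto.congr' hev (tendsto_const_nhds.div htend hsup_pos.ne')⟩
  · have htop : Tendsto (cc hinv g v) atTop atTop :=
      tendsto_atTop_atTop_of_monotone' hccmono hbdd
    refine ⟨0, Tendsto.congr' hev ?_⟩
    have h1 : Tendsto (fun n => Sc * (cc hinv g v n)⁻¹) atTop (nhds (Sc * 0)) :=
      (htop.inv_tendsto_atTop).const_mul Sc
    rw [mul_zero] at h1
    simpa [div_eq_mul_inv] using h1

end Summable

section Divergent

set_option linter.unusedSectionVars false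

variable {h hinv g : ℝ → ℝ}
variable (hA0 : ∀ x : ℝ, h x = h |x| ∧ 0 ≤ h x)
variable (hA4 : h 0 = 0)
variable (hmono : StrictMonoOn h (Set.Ici (0 : ℝ)))
variable (hinv_left : ∀ x : ℝ, 0 ≤ x → hinv (h x) = x)
variable (hinv_right : ∀ y : ℝ, 0 ≤ y → h (hinv y) = y)
variable (hgpos : ∀ x, 0 < g x) (hgmono : Monotone g)

include hA0 hA4 hmono hinv_left hinv_right hgpos hgmono

/-- In the divergent world, under the skeptic's solvency, escapes happen infinitely often. -/
lemma escapes_io {v M V : ℕ → ℝ} (hv : ∀ n, 0 ≤ v n) (hV : ∀ n, 0 ≤ V n)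
    (hK : ∀ n, 0 ≤ (stt h hinv g v M V n).K)
    (hnsum : ¬ Summable fun n => bet g v n) :
    ∀ N, ∃ n, N ≤ n ∧ elig g v V n (stt h hinv g v M V n) := by
  classical
  have hbet0 : ∀ n, 0 ≤ bet g v n := bet_nonneg hgpos hv
  have hmin0 : ∀ n, 0 ≤ min (bet g v n) 1 := fun n => le_min (hbet0 n) zero_le_one
  -- partial sums of bet tend to infinity
  have hPtop : Tendsto (fun n => ∑ i ∈ Finset.range n, bet g v i) atTop atTop :=
    (not_summable_iff_tendsto_nat_atTop_of_nonneg hbet0).1 hnsum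
  -- partial sums of min bet 1 tend to infinity
  have hnsum' : ¬ Summable fun n => min (bet g v n) 1 := by
    intro hs'
    apply hnsum
    have h0 : Tendsto (fun n => min (bet g v n) 1) atTop (nhds 0) := hs'.tendsto_atTop_zero
    have h1 : ∀ᶠ n in atTop, min (bet g v n) 1 < 1 := h0.eventually (gt_mem_nhds one_pos)
    obtain ⟨N, hN⟩ := eventually_atTop.1 h1
    have h2 : Summable fun n => min (bet g v (n + N)) 1 := (summable_nat_add_iff N).2 hs'
    have h3 : (fun n => min (bet g v (n + N)) 1) = fun n => bet g v (n + N) := by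
      funext n
      have h4 := hN (n + N) (by omega)
      have h5 : bet g v (n + N) < 1 := by
        by_contra h6
        push_neg at h6
        rw [min_eq_right h6] at h4
        exact lt_irrefl _ h4
      exact min_eq_left h5.le
    rw [h3] at h2
    exact (summable_nat_add_iff N).1 h2
  have hBtop : Tendsto (fun n => BB g v n) atTop atTop := by
    have htop0 : Tendsto (fun n => ∑ i ∈ Finset.range n, min (bet g v i) 1) atTop atTop :=
      (not_summable_iff_tendsto_nat_atTop_of_nonneg hmin0).1 hnsum'
    exact htop0.comp (tendsto_add_atTop_nat 1)
  intro N
  by_contra hcon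
  push_neg at hcon
  -- j is constant from N on
  have hjconst : ∀ n, N ≤ n → (stt h hinv g v M V n).j = (stt h hinv g v M V N).j := by
    intro n hn
    induction n, hn using Nat.le_induction with
    | base => rfl
    | succ n hn ih =>
      have : (stt h hinv g v M V (n+1)).j = (stt h hinv g v M V n).j := by
        simp [stt, hcon n hn]
      rw [this, ih]
  obtain ⟨N₁', hN₁'⟩ := eventually_atTop.1
    (hBtop.eventually_ge_atTop (((stt h hinv g v M V N).j : ℝ) + 1))
  set N₁ := max N N₁' with hN₁def
  have htight : ∀ n, N₁ ≤ n → 1 - (stt h hinv g v M V n).K < V n * (g (Aa v n) - v n) := by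
    intro n hn
    by_contra h6
    push_neg at h6
    apply hcon n (le_trans (le_max_left _ _) hn)
    refine ⟨h6, ?_⟩
    rw [hjconst n (le_trans (le_max_left _ _) hn)]
    exact hN₁' n (le_trans (le_max_right _ _) hn)
  -- capital recursion on declined rounds
  have hKrec : ∀ n, N ≤ n →
      (stt h hinv g v M V (n+1)).K = (stt h hinv g v M V n).K - V n * v n := by
    intro n hn
    have hmv : mv hinv g v M V n (stt h hinv g v M V n) = 0 := by
      unfold mv; rw [if_neg (hcon n hn)]
    show (stt h hinv g v M V n).K + M n * mv hinv g v M V n (stt h hinv g v M V n) +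
        V n * (h (mv hinv g v M V n (stt h hinv g v M V n)) - v n) = _
    rw [hmv, hA4]
    ring
  have hKle := K_le_one hA0 hA4 hmono hinv_left hinv_right hgpos hgmono
    (v := v) (M := M) (V := V) hv hV
  -- per-round payment lower bound
  have hkey : ∀ n, N₁ ≤ n →
      (1 - (stt h hinv g v M V n).K) * bet g v n ≤ V n * v n := by
    intro n hn
    have hgv : 0 < g (Aa v n) := hgpos _
    have h1 : 1 - (stt h hinv g v M V n).K ≤ V n * (g (Aa v n) - v n) := (htight n hn).le
    have h2 : (1 - (stt h hinv g v M V n).K) * v n ≤ V n * (g (Aa v n) - v n) * v n :=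
      mul_le_mul_of_nonneg_right h1 (hv n)
    have h3 : V n * (g (Aa v n) - v n) * v n ≤ V n * v n * g (Aa v n) := by
      nlinarith [mul_nonneg (hV n) (hv n), hv n, sq_nonneg (v n)]
    have h4 : (1 - (stt h hinv g v M V n).K) * v n ≤ V n * v n * g (Aa v n) := le_trans h2 h3
    unfold bet
    rw [← mul_div_assoc, div_le_iff₀ hgv]
    exact h4
  -- a seed round with positive v
  have hseed : ∃ n₂, N₁ ≤ n₂ ∧ 0 < v n₂ := by
    by_contra h6
    push_neg at h6
    have hv0 : ∀ n, N₁ ≤ n → v n = 0 := fun n hn => le_antisymm (h6 n hn) (hv n)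
    have hBconst : ∀ n, N₁ ≤ n → BB g v n = BB g v N₁ := by
      intro n hn
      induction n, hn using Nat.le_induction with
      | base => rfl
      | succ n hn ih =>
        have : bet g v (n+1) = 0 := by
          unfold bet; rw [hv0 (n+1) (by omega), zero_div]
        unfold BB
        rw [Finset.sum_range_succ, this]
        simpa [BB] using ih
    obtain ⟨N₂, hN₂⟩ := eventually_atTop.1 (hBtop.eventually_ge_atTop (BB g v N₁ + 1))
    have h7 := hN₂ (max N₁ N₂) (le_max_right _ _)
    rw [hBconst (max N₁ N₂) (le_max_left _ _)] at h7
    linarith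
  obtain ⟨n₂, hn₂, hvpos⟩ := hseed
  -- the slack is positive right after the seed round
  have hNn₂ : N ≤ n₂ := le_trans (le_max_left _ _) hn₂
  have hVpos : 0 < V n₂ := by
    rcases lt_or_eq_of_le (hV n₂) with h' | h'
    · exact h'
    · exfalso
      have := htight n₂ hn₂
      rw [← h'] at this
      have hk := hK n₂
      have hk1 := hKle n₂
      simp at this
      linarith
  have hKn₂pos : 0 < V n₂ * (g (Aa v n₂) - v n₂) := lt_of_le_of_lt (by
      have := hK n₂; have := hKle n₂; linarith) (htight n₂ hn₂)
  have hσstar : 0 < 1 - (stt h hinv g v M V (n₂+1)).K := by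
    rw [hKrec n₂ hNn₂]
    have h8 : 0 < V n₂ * v n₂ := mul_pos hVpos hvpos
    have := hKle n₂
    linarith
  set σs := 1 - (stt h hinv g v M V (n₂+1)).K with hσsdef
  -- slack is monotone from N on
  have hσmono : ∀ a b, N ≤ a → a ≤ b →
      1 - (stt h hinv g v M V a).K ≤ 1 - (stt h hinv g v M V b).K := by
    intro a b ha hab
    induction b, hab using Nat.le_induction with
    | base => exact le_refl _
    | succ b hab ih =>
      have h9 : N ≤ b := le_trans ha hab
      have := hKrec b h9
      have h10 : 0 ≤ V b * v b := mul_nonneg (hV b) (hv b)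
      linarith
  -- growth of the slack
  have hgrow : ∀ p, σs + σs * (∑ k ∈ Finset.Ico (n₂+1) (n₂+1+p), bet g v k) ≤
      1 - (stt h hinv g v M V (n₂+1+p)).K := by
    intro p
    induction p with
    | zero => simp [hσsdef]
    | succ p ih =>
      have hnp : N₁ ≤ n₂ + 1 + p := by omega
      have hNnp : N ≤ n₂ + 1 + p := le_trans (le_max_left _ _) hnp
      have h11 := hkey (n₂+1+p) hnp
      have h12 : σs ≤ 1 - (stt h hinv g v M V (n₂+1+p)).K :=
        hσmono (n₂+1) (n₂+1+p) (by omega) (by omega)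
      have h13 : σs * bet g v (n₂+1+p) ≤ V (n₂+1+p) * v (n₂+1+p) := by
        have hb := hbet0 (n₂+1+p)
        nlinarith
      have h14 : (stt h hinv g v M V (n₂+1+p+1)).K =
          (stt h hinv g v M V (n₂+1+p)).K - V (n₂+1+p) * v (n₂+1+p) := hKrec _ hNnp
      rw [show n₂ + 1 + (p + 1) = (n₂ + 1 + p) + 1 from by omega,
        Finset.sum_Ico_succ_top (by omega : n₂ + 1 ≤ n₂ + 1 + p), h14]
      nlinarith
  -- contradiction: the slack exceeds 1
  obtain ⟨N₃, hN₃⟩ := eventually_atTop.1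
    (hPtop.eventually_ge_atTop ((∑ i ∈ Finset.range (n₂+1), bet g v i) + 2 / σs))
  set n₄ := max N₃ (n₂+1) with hn₄def
  have h15 := hN₃ n₄ (le_max_left _ _)
  have h16 : n₂ + 1 ≤ n₄ := le_max_right _ _
  have h17 : ∑ k ∈ Finset.Ico (n₂+1) n₄, bet g v k ≥ 2 / σs := by
    rw [Finset.sum_Ico_eq_sub _ h16]
    linarith
  have h18 := hgrow (n₄ - (n₂+1))
  rw [show n₂ + 1 + (n₄ - (n₂+1)) = n₄ from by omega] at h18
  have h19 : σs * (2 / σs) ≤ σs * (∑ k ∈ Finset.Ico (n₂+1) n₄, bet g v k) :=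
    mul_le_mul_of_nonneg_left h17 hσstar.le
  rw [mul_div_cancel₀ _ hσstar.ne'] at h19
  have h20 := hK n₄
  linarith

/-- At an escape round the ratio moves by at least 1/2. -/
lemma escape_sep {v M V : ℕ → ℝ} (k : ℕ)
    (he : elig g v V (k+1) (stt h hinv g v M V (k+1))) :
    1/2 ≤ |(stt h hinv g v M V (k+2)).S / cc hinv g v (k+1)
          - (stt h hinv g v M V (k+1)).S / cc hinv g v k| := by
  classical
  have hcpos : 0 < cc hinv g v (k+1) :=
    cc_pos hA0 hA4 hmono hinv_left hinv_right hgpos hgmono (v := v) (k+1)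
  have hp : hinv (g (∑ i ∈ Finset.range (k+1), v i)) = cc hinv g v k := rfl
  set st := stt h hinv g v M V (k+1) with hstdef
  set c := cc hinv g v (k+1) with hcdef
  set x := st.S / c with hxdef
  set p := st.S / cc hinv g v k with hpdef
  set sgv := sg (M (k+1)) with hsgdef
  have hS2 : (stt h hinv g v M V (k+2)).S = st.S + mv hinv g v M V (k+1) st := rfl
  have habs : |sgv| = 1 := abs_sg _
  have htri : |sgv| ≤ |x + sgv - p| + |x - p| := by
    have h5 := abs_add_le (x + sgv - p) (-(x - p))
    rw [abs_neg] at h5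
    have h6 : (x + sgv - p) + (-(x - p)) = sgv := by ring
    rwa [h6] at h5
  by_cases hb : |st.S / cc hinv g v (k+1) -
      st.S / hinv (g (∑ i ∈ Finset.range (k+1), v i))| ≤
      |st.S / cc hinv g v (k+1) + sg (M (k+1)) -
      st.S / hinv (g (∑ i ∈ Finset.range (k+1), v i))|
  · have hmv : mv hinv g v M V (k+1) st = sgv * c := by
      unfold mv
      rw [if_pos he, if_pos hb]
    rw [hS2, hmv]
    have hq : (st.S + sgv * c) / c = x + sgv := by
      rw [hxdef, add_div, mul_div_assoc, div_self hcpos.ne', mul_one]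
    rw [hq]
    have hb' : |x - p| ≤ |x + sgv - p| := by
      rw [hp] at hb
      exact hb
    show 1/2 ≤ |x + sgv - p|
    rw [habs] at htri
    linarith
  · have hmv : mv hinv g v M V (k+1) st = 0 := by
      unfold mv
      rw [if_pos he, if_neg hb]
    rw [hS2, hmv, add_zero]
    have hb' : |x + sgv - p| < |x - p| := by
      rw [hp] at hb
      push_neg at hb
      exact hb
    show 1/2 ≤ |x - p|
    rw [habs] at htri
    linarith

/-- In the divergent world the ratio does not converge. -/
lemma no_limit {v M V : ℕ → ℝ} (hv : ∀ n, 0 ≤ v n) (hV : ∀ n, 0 ≤ V n)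
    (hK : ∀ n, 0 ≤ (stt h hinv g v M V n).K)
    (hnsum : ¬ Summable fun n => bet g v n) :
    ¬ ∃ L, Tendsto (fun n => (stt h hinv g v M V (n+1)).S / cc hinv g v n) atTop (nhds L) := by
  rintro ⟨L, hL⟩
  set ρ := fun n => (stt h hinv g v M V (n+1)).S / cc hinv g v n with hρdef
  have hdiff : Tendsto (fun n => ρ (n+1) - ρ n) atTop (nhds (L - L)) :=
    (hL.comp (tendsto_add_atTop_nat 1)).sub hL
  rw [sub_self] at hdiff
  have h1 : ∀ᶠ n in atTop, |ρ (n+1) - ρ n| < 1/2 := by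
    have h2 := NormedAddCommGroup.tendsto_nhds_zero.mp hdiff (1/2) (by norm_num)
    simpa [Real.norm_eq_abs] using h2
  obtain ⟨N0, hN0⟩ := eventually_atTop.1 h1
  obtain ⟨n, hn, he⟩ := escapes_io hA0 hA4 hmono hinv_left hinv_right hgpos hgmono
    hv hV hK hnsum (N0 + 1)
  obtain ⟨k, rfl⟩ : ∃ k, n = k + 1 := ⟨n - 1, by omega⟩
  have hsep := escape_sep hA0 hA4 hmono hinv_left hinv_right hgpos hgmono k he
  have hcl := hN0 k (by omega)
  have : |ρ (k+1) - ρ k| = |(stt h hinv g v M V (k+2)).S / cc hinv g v (k+1)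
      - (stt h hinv g v M V (k+1)).S / cc hinv g v k| := rfl
  rw [this] at hcl
  linarith

end Divergent

end Stmt11

open Stmt11 in
/-- In the unbounded forecasting game with general hedge `h` satisfying
(A0)-(A2) and `h 0 = 0`, with `g` a positive increasing function and
`A n = ∑_{k ≤ n} v k`, Reality can strongly comply with:
`∑ v n / g (A n) < ∞  ↔  (∑_{k ≤ n} (x k - m k)) / (h⁻¹ ∘ g)(A n)` converges. -/
theorem stmt_11 (h hinv : ℝ → ℝ)
    (hA0 : ∀ x : ℝ, h x = h |x| ∧ 0 ≤ h x)
    (hA1 : ∀ x y : ℝ, 0 < x → x ≤ y → h x / x ≤ h y / y)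
    (hA2 : ∀ x y : ℝ, 0 < x → x ≤ y → h y / y ^ 2 ≤ h x / x ^ 2)
    (hA4 : h 0 = 0)
    (hmono : StrictMonoOn h (Set.Ici (0 : ℝ)))
    (hinv_left : ∀ x : ℝ, 0 ≤ x → hinv (h x) = x)
    (hinv_right : ∀ y : ℝ, 0 ≤ y → h (hinv y) = y)
    (g : ℝ → ℝ) (hgpos : ∀ x, 0 < g x) (hgmono : Monotone g) :
    ∃ R : (ℕ → ℝ) → (ℕ → ℝ) → (ℕ → ℝ) → (ℕ → ℝ) → ℕ → ℝ,
      (∀ m m' v v' M M' V V' : ℕ → ℝ, ∀ n,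
        (∀ k ≤ n, m k = m' k) → (∀ k ≤ n, v k = v' k) →
        (∀ k ≤ n, M k = M' k) → (∀ k ≤ n, V k = V' k) →
        R m v M V n = R m' v' M' V' n) ∧
      ∀ m v M V : ℕ → ℝ, (∀ n, 0 ≤ v n) → (∀ n, 0 ≤ V n) →
        (∀ n, 0 ≤ capitalH h m v M V (R m v M V) n) →
          ((Summable (fun n => v n / g (∑ k ∈ Finset.range (n + 1), v k)) ↔
            ∃ L : ℝ, Tendsto
              (fun n => (∑ k ∈ Finset.range (n + 1), (R m v M V k - m k)) /
                hinv (g (∑ k ∈ Finset.range (n + 1), v k)))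
              atTop (nhds L)) ∧
           ∀ n, capitalH h m v M V (R m v M V) n ≤ 1) := by
  classical
  refine ⟨fun m v M V n => m n + mv hinv g v M V n (stt h hinv g v M V n), ?_, ?_⟩
  · intro m m' v v' M M' V V' n hm hv hM hV
    simp only []
    have e1 : stt h hinv g v M V n = stt h hinv g v' M' V' n := stt_congr n hv hM hV
    rw [hm n le_rfl, e1, mv_congr _ hv hM hV]
  · intro m v M V hv hV hK
    simp only [] at hK ⊢
    have hKeq : ∀ n,
        capitalH h m v M V
          (fun k => m k + mv hinv g v M V k (stt h hinv g v M V k)) n =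
        (stt h hinv g v M V n).K := K_eq
    have hK' : ∀ n, 0 ≤ (stt h hinv g v M V n).K := by
      intro n
      rw [← hKeq n]
      exact hK n
    have hfun : (fun n => (∑ k ∈ Finset.range (n + 1),
          (m k + mv hinv g v M V k (stt h hinv g v M V k) - m k)) /
          hinv (g (∑ k ∈ Finset.range (n + 1), v k))) =
        fun n => (stt h hinv g v M V (n+1)).S / cc hinv g v n := by
      funext n
      have hnum : (∑ k ∈ Finset.range (n + 1),
          (m k + mv hinv g v M V k (stt h hinv g v M V k) - m k)) =
          (stt h hinv g v M V (n+1)).S := by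
        rw [S_eq]
        refine Finset.sum_congr rfl fun k _ => ?_
        simp
      rw [hnum]
      rfl
    constructor
    · rw [hfun]
      constructor
      · intro hsum
        exact exists_limit hA0 hA4 hmono hinv_left hinv_right hgpos hgmono hv hsum
      · intro hex
        by_contra hns
        exact no_limit hA0 hA4 hmono hinv_left hinv_right hgpos hgmono hv hV hK' hns hex
    · intro n
      rw [hKeq n]
      exact K_le_one hA0 hA4 hmono hinv_left hinv_right hgpos hgmono hv hV n
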